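/- Let k be an algebraically closed field of characteristic 2 and let e be a nonzero nilpotent 2×2 matrix over k. Then there is no 2×2 matrix f over k such that ⁅e,f⁆ is not a scalar multiple of the identity matrix while both ⁅⁅e,f⁆,e⁆ and ⁅⁅e,f⁆,f⁆ are scalar multiples of the identity matrix. (Equivalently, in pgl_2(k) = gl_2(k)/k·1 no nonzero nilpotent element extends to an sl₂-triple.) -/

import Mathlib

/-- For a nonzero nilpotent 2×2 matrix `e` over an algebraically closed
field of characteristic 2, there is no `f` such that `⁅e,f⁆` is not scalar while
`⁅⁅e,f⁆,e⁆` and `⁅⁅e,f⁆,f⁆` are both scalar; i.e. in `pgl₂(k)` no nonzero nilpotent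
extends to an `sl₂`-triple. -/
theorem stmt_16 (k : Type*) [Field k] [IsAlgClosed k] [CharP k 2]
    (e : Matrix (Fin 2) (Fin 2) k) (hne : e ≠ 0) (he : IsNilpotent e) :
    ¬ ∃ f : Matrix (Fin 2) (Fin 2) k,
        (¬ ∃ c : k, ⁅e, f⁆ = c • (1 : Matrix (Fin 2) (Fin 2) k)) ∧
        (∃ c : k, ⁅⁅e, f⁆, e⁆ = c • (1 : Matrix (Fin 2) (Fin 2) k)) ∧
        (∃ c : k, ⁅⁅e, f⁆, f⁆ = c • (1 : Matrix (Fin 2) (Fin 2) k)) := by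
  rintro ⟨f, hns, -, ⟨c, hc⟩⟩
  have h2 : (2 : k) = 0 := by exact_mod_cast CharP.cast_eq_zero k 2
  -- trace of e is zero
  have htr : e 0 0 + e 1 1 = 0 := by
    have := (Matrix.isNilpotent_trace_of_isNilpotent he).eq_zero
    rwa [Matrix.trace_fin_two] at this
  set t : k := f 0 0 + f 1 1 with ht
  set x : k := ⁅e, f⁆ 0 0 - t * e 0 0 with hx
  have key : ⁅e, f⁆ = t • e + x • (1 : Matrix (Fin 2) (Fin 2) k) := by
    have h11 : e 1 1 = e 0 0 := by linear_combination htr - e 0 0 * h2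
    ext i j
    fin_cases i <;> fin_cases j <;>
      simp [Ring.lie_def, Matrix.sub_apply, Matrix.add_apply, Matrix.smul_apply,
        Matrix.mul_apply, Fin.sum_univ_two, Matrix.one_apply, hx, ht, h11]
    · linear_combination (-(e 0 1 * f 0 0)) * h2
    · linear_combination (-(e 1 0 * f 1 1)) * h2
    · linear_combination (e 1 0 * f 0 1 - f 1 0 * e 0 1) * h2
  have hlie : ⁅⁅e, f⁆, f⁆ = t • ⁅e, f⁆ := by
    letI : LieRing (Matrix (Fin 2) (Fin 2) k) := LieRing.ofAssociativeRing
    letI : LieAlgebra k (Matrix (Fin 2) (Fin 2) k) := LieAlgebra.ofAssociativeAlgebra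
    rw [key, add_lie, smul_lie, smul_lie, (Commute.one_left f).lie_eq, smul_zero, add_zero, key]
  rw [hlie] at hc
  rcases eq_or_ne t 0 with h0 | h0
  · exact hns ⟨x, by rw [key, h0, zero_smul, zero_add]⟩
  · exact hns ⟨c / t, by rw [div_eq_inv_mul, mul_smul, ← hc, ← smul_assoc, smul_eq_mul,
      inv_mul_cancel₀ h0, one_smul]⟩
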